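/- Let r ≥ 3, f : ℝ^d → ℝ convex and differentiable with minimizer x⋆, and X a twice-differentiable solution of X''(t) + (r/t) X'(t) + ∇f(X t) = 0 on (0,∞) with X(t) → x₀ and t X'(t) → 0 as t → 0⁺. Then for all t > 0, f(X t) - f(x⋆) ≤ (r-1)² ‖x₀ - x⋆‖² / (2 t²). -/

import Mathlib

open scoped RealInnerProductSpace
open Real Set Filter

theorem su_boyd_candes_flow_rate
    (d : ℕ) (r : ℝ) (hr : 3 ≤ r)
    (f : EuclideanSpace ℝ (Fin d) → ℝ) (hf : Differentiable ℝ f)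
    (hconv : ∀ x y, f y ≥ f x + ⟪gradient f x, y - x⟫)
    (xstar : EuclideanSpace ℝ (Fin d)) (hmin : ∀ y, f xstar ≤ f y)
    (x₀ : EuclideanSpace ℝ (Fin d))
    (X X' X'' : ℝ → EuclideanSpace ℝ (Fin d))
    (hX : ∀ t ∈ Set.Ioi (0 : ℝ), HasDerivAt X (X' t) t)
    (hX' : ∀ t ∈ Set.Ioi (0 : ℝ), HasDerivAt X' (X'' t) t)
    (hODE : ∀ t ∈ Set.Ioi (0 : ℝ),
      X'' t + (r / t) • X' t + gradient f (X t) = 0)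
    (hX0 : Tendsto X (nhdsWithin 0 (Set.Ioi 0)) (nhds x₀))
    (hX'0 : Tendsto (fun t => t • X' t) (nhdsWithin 0 (Set.Ioi 0)) (nhds 0)) :
    ∀ t > (0 : ℝ),
      f (X t) - f xstar ≤ (r - 1) ^ 2 * ‖x₀ - xstar‖ ^ 2 / (2 * t ^ 2) := by
  set u : ℝ → EuclideanSpace ℝ (Fin d) :=
    fun s => (r - 1) • (X s - xstar) + s • X' s with hu_def
  set E : ℝ → ℝ := fun s => s ^ 2 * (f (X s) - f xstar) + (1/2) * ⟪u s, u s⟫ with hE_def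
  -- derivative of E on (0, ∞)
  have hEderiv : ∀ s ∈ Ioi (0:ℝ), HasDerivAt E
      (2 * s * (f (X s) - f xstar)
        - s * (r - 1) * ⟪X s - xstar, gradient f (X s)⟫) s := by
    intro s hs
    have hs0 : (s : ℝ) ≠ 0 := ne_of_gt hs
    have hgrad : HasGradientAt f (gradient f (X s)) (X s) := (hf (X s)).hasGradientAt
    have hfX : HasDerivAt (fun w => f (X w)) ⟪gradient f (X s), X' s⟫ s := by
      have h := hgrad.hasFDerivAt.comp_hasDerivAt s (hX s hs)
      rw [InnerProductSpace.toDual_apply_apply] at h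
      exact h
    -- derivative of u
    have hu1 : HasDerivAt u
        ((r - 1) • X' s + (s • X'' s + (1:ℝ) • X' s)) s := by
      have h2 := (hasDerivAt_id s).smul (hX' s hs)
      simp only [id] at h2
      exact (((hX s hs).sub_const xstar).const_smul (r - 1)).add h2
    have hODEs : s • X'' s + r • X' s + s • gradient f (X s) = 0 := by
      have h := congrArg (fun v => s • v) (hODE s hs)
      have hsr : s * (r / s) = r := by field_simp
      simpa [smul_add, smul_smul, hsr] using h
    have hvec : (r - 1) • X' s + (s • X'' s + (1:ℝ) • X' s)
        = -(s • gradient f (X s)) := by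
      have h2 : s • X'' s + r • X' s = -(s • gradient f (X s)) := by
        have := hODEs
        rw [add_eq_zero_iff_eq_neg] at this
        exact this
      rw [← h2]
      module
    have hu' : HasDerivAt u (-(s • gradient f (X s))) s := hvec ▸ hu1
    have hsq : HasDerivAt (fun w => w ^ 2 * (f (X w) - f xstar))
        (2 * s * (f (X s) - f xstar) + s ^ 2 * ⟪gradient f (X s), X' s⟫) s := by
      have h := (hasDerivAt_pow 2 s).mul (hfX.sub_const (f xstar))
      refine h.congr_deriv ?_
      ring
    have hinner : HasDerivAt (fun w => (1/2 : ℝ) * ⟪u w, u w⟫)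
        ((1/2 : ℝ) * (⟪u s, -(s • gradient f (X s))⟫
          + ⟪-(s • gradient f (X s)), u s⟫)) s :=
      (hu'.inner ℝ hu').const_mul (1/2 : ℝ)
    have htot := hsq.add hinner
    refine htot.congr_deriv ?_
    have hcomm : ⟪-(s • gradient f (X s)), u s⟫ = ⟪u s, -(s • gradient f (X s))⟫ :=
      real_inner_comm _ _
    rw [hcomm]
    have hexp : ⟪u s, -(s • gradient f (X s))⟫
        = -(s * ((r - 1) * ⟪X s - xstar, gradient f (X s)⟫
            + s * ⟪X' s, gradient f (X s)⟫)) := by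
      simp only [hu_def]
      rw [inner_neg_right, real_inner_smul_right, inner_add_left,
        real_inner_smul_left, real_inner_smul_left]
    have hc2 : ⟪gradient f (X s), X' s⟫ = ⟪X' s, gradient f (X s)⟫ :=
      real_inner_comm _ _
    rw [hexp, hc2]
    ring
  -- E is antitone on (0, ∞)
  have hanti : AntitoneOn E (Ioi 0) := by
    apply antitoneOn_of_deriv_nonpos (convex_Ioi 0)
    · exact fun s hs => ((hEderiv s hs).continuousAt).continuousWithinAt
    · intro s hs
      rw [interior_Ioi] at hs
      exact ((hEderiv s hs).differentiableAt).differentiableWithinAt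
    · intro s hs
      rw [interior_Ioi] at hs
      rw [(hEderiv s hs).deriv]
      have hkey : f (X s) - f xstar ≤ ⟪X s - xstar, gradient f (X s)⟫ := by
        have h := hconv (X s) xstar
        have h2 : ⟪gradient f (X s), xstar - X s⟫
            = -⟪X s - xstar, gradient f (X s)⟫ := by
          rw [real_inner_comm, ← inner_neg_left, neg_sub]
        rw [h2] at h
        linarith
      have hnn : 0 ≤ f (X s) - f xstar := sub_nonneg.2 (hmin (X s))
      have hB : 0 ≤ ⟪X s - xstar, gradient f (X s)⟫ := le_trans hnn hkey
      have hs' : (0:ℝ) < s := hs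
      nlinarith [mul_le_mul_of_nonneg_left hkey hs'.le, mul_nonneg hs'.le hB,
        mul_nonneg hs'.le hnn]
  -- limit of E at 0⁺
  have ht0 : Tendsto (fun s : ℝ => s) (nhdsWithin 0 (Ioi 0)) (nhds 0) :=
    (continuous_id.tendsto 0).mono_left nhdsWithin_le_nhds
  have hulim : Tendsto u (nhdsWithin 0 (Ioi 0)) (nhds ((r - 1) • (x₀ - xstar))) := by
    have h1 : Tendsto (fun s => (r - 1) • (X s - xstar)) (nhdsWithin 0 (Ioi 0))
        (nhds ((r - 1) • (x₀ - xstar))) :=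
      ((hX0.sub_const xstar).const_smul (r - 1))
    simpa using h1.add hX'0
  have hElim : Tendsto E (nhdsWithin 0 (Ioi 0))
      (nhds ((1/2 : ℝ) * ⟪(r - 1) • (x₀ - xstar), (r - 1) • (x₀ - xstar)⟫)) := by
    have hfx : Tendsto (fun s => f (X s) - f xstar) (nhdsWithin 0 (Ioi 0))
        (nhds (f x₀ - f xstar)) := ((hf.continuous.tendsto x₀).comp hX0).sub_const _
    have hsq : Tendsto (fun s : ℝ => s ^ 2) (nhdsWithin 0 (Ioi 0)) (nhds 0) := by
      simpa using ht0.pow 2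
    have h1 : Tendsto (fun s => s ^ 2 * (f (X s) - f xstar)) (nhdsWithin 0 (Ioi 0))
        (nhds 0) := by simpa using hsq.mul hfx
    have h2 : Tendsto (fun s => (1/2 : ℝ) * ⟪u s, u s⟫) (nhdsWithin 0 (Ioi 0))
        (nhds ((1/2 : ℝ) * ⟪(r - 1) • (x₀ - xstar), (r - 1) • (x₀ - xstar)⟫)) :=
      (hulim.inner hulim).const_mul _
    have h3 := h1.add h2
    rw [zero_add] at h3
    exact h3
  intro t ht
  have htIoi : t ∈ Ioi (0:ℝ) := ht
  -- E t ≤ limit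
  have hEt_le : E t ≤ (1/2 : ℝ) * ⟪(r - 1) • (x₀ - xstar), (r - 1) • (x₀ - xstar)⟫ := by
    apply ge_of_tendsto hElim
    filter_upwards [Ioo_mem_nhdsGT_of_mem (by constructor <;> simp [ht] : (0:ℝ) ∈ Ico (0:ℝ) t)]
      with s hs
    exact hanti hs.1 htIoi hs.2.le
  have hval : (1/2 : ℝ) * ⟪(r - 1) • (x₀ - xstar), (r - 1) • (x₀ - xstar)⟫
      = (r - 1) ^ 2 * ‖x₀ - xstar‖ ^ 2 / 2 := by
    rw [real_inner_smul_left, real_inner_smul_right, real_inner_self_eq_norm_sq]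
    ring
  have hEt_lb : t ^ 2 * (f (X t) - f xstar) ≤ E t := by
    have : (0:ℝ) ≤ (1/2 : ℝ) * ⟪u t, u t⟫ := by
      have h : (0:ℝ) ≤ ⟪u t, u t⟫ := real_inner_self_nonneg
      linarith
    simp only [hE_def]
    linarith
  rw [hval] at hEt_le
  have h4 : t ^ 2 * (f (X t) - f xstar) ≤ (r - 1) ^ 2 * ‖x₀ - xstar‖ ^ 2 / 2 :=
    le_trans hEt_lb hEt_le
  rw [le_div_iff₀ (by positivity : (0:ℝ) < 2 * t ^ 2)]
  nlinarith [h4]
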